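/- Let 0 < c < 1 and β = 2/c − 1. Define ψ(x) = (1−x)^{β(1−x)} (1−y)^{β(1−y)} / (x^x y^y) for 0 ≤ x ≤ c, where y = c − x (with the convention 0^0 = 1). Then ψ attains its minimum on [0, c] at the endpoints: ψ(x) ≥ ψ(0) = ψ(c) = (1−c)^{β(1−c)} / c^c for all 0 ≤ x ≤ c. -/

import Mathlib

/-- The function `ψ(x) = (1-x)^(β(1-x)) (1-y)^(β(1-y)) / (x^x y^y)` with
`y = c - x`, using real powers (`Real.rpow`, so that `0^0 = 1`). -/
noncomputable def psiFn (c β x : ℝ) : ℝ :=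
  ((1 - x) ^ (β * (1 - x)) * (1 - (c - x)) ^ (β * (1 - (c - x)))) /
    (x ^ x * (c - x) ^ (c - x))

open Real Set

/-- log-scale version of ψ. -/
noncomputable def fAux (c β x : ℝ) : ℝ :=
  β * ((1 - x) * Real.log (1 - x)) + β * ((1 - (c - x)) * Real.log (1 - (c - x)))
    - x * Real.log x - (c - x) * Real.log (c - x)

lemma rpow_self_exp {x : ℝ} (hx : 0 ≤ x) : x ^ x = Real.exp (x * Real.log x) := by
  rcases eq_or_lt_of_le hx with h | h
  · simp [← h]
  · rw [Real.rpow_def_of_pos h]; ring_nf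

lemma fAux_continuous (c β : ℝ) : Continuous (fAux c β) := by
  have h := Real.continuous_mul_log
  have h1 : Continuous fun x : ℝ => (1 - x) * Real.log (1 - x) :=
    h.comp (continuous_const.sub continuous_id)
  have h2 : Continuous fun x : ℝ => (1 - (c - x)) * Real.log (1 - (c - x)) :=
    h.comp (continuous_const.sub (continuous_const.sub continuous_id))
  have h3 : Continuous fun x : ℝ => (c - x) * Real.log (c - x) :=
    h.comp (continuous_const.sub continuous_id)
  exact (((continuous_const.mul h1).add (continuous_const.mul h2)).sub h).sub h3

lemma hasDerivAt_fAux (c β : ℝ) {x : ℝ} (hx0 : 0 < x) (hxc : x < c) (hc1 : c < 1) :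
    HasDerivAt (fAux c β)
      (β * (Real.log (1 - (c - x)) - Real.log (1 - x))
        + (Real.log (c - x) - Real.log x)) x := by
  have h1x : (0:ℝ) < 1 - x := by linarith
  have h2x : (0:ℝ) < 1 - (c - x) := by linarith
  have hcx : (0:ℝ) < c - x := by linarith
  have d1 : HasDerivAt (fun x : ℝ => (1 - x) * Real.log (1 - x))
      ((Real.log (1 - x) + 1) * (-1)) x :=
    (Real.hasDerivAt_mul_log h1x.ne').comp x ((hasDerivAt_id x).const_sub 1)
  have d2 : HasDerivAt (fun x : ℝ => (1 - (c - x)) * Real.log (1 - (c - x)))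
      ((Real.log (1 - (c - x)) + 1) * (0 - (-1))) x :=
    by have := (Real.hasDerivAt_mul_log h2x.ne').comp x
        ((hasDerivAt_const x (1:ℝ)).sub ((hasDerivAt_id x).const_sub c))
       exact this
  have d3 : HasDerivAt (fun x : ℝ => x * Real.log x) (Real.log x + 1) x :=
    Real.hasDerivAt_mul_log hx0.ne'
  have d4 : HasDerivAt (fun x : ℝ => (c - x) * Real.log (c - x))
      ((Real.log (c - x) + 1) * (-1)) x :=
    (Real.hasDerivAt_mul_log hcx.ne').comp x ((hasDerivAt_id x).const_sub c)
  have := (((d1.const_mul β).add (d2.const_mul β)).sub d3).sub d4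
  refine this.congr_deriv ?_
  ring

/-- Key pointwise inequality: `G(t) ≥ 0` for `0 < t ≤ c/2`. -/
lemma G_nonneg (c : ℝ) (hc0 : 0 < c) (hc1 : c < 1) {t : ℝ} (ht : 0 < t) (ht2 : t ≤ c / 2) :
    (2 - c) * (Real.log (1 - t) - Real.log (1 - (c - t)))
      ≤ c * (Real.log (c - t) - Real.log t) := by
  set G : ℝ → ℝ := fun s =>
    c * (Real.log (c - s) - Real.log s)
      - (2 - c) * (Real.log (1 - s) - Real.log (1 - (c - s))) with hGdef
  have hderiv : ∀ s ∈ Ioo (0:ℝ) c,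
      HasDerivAt G
        (c * ((c - s)⁻¹ * (-1) - s⁻¹)
          - (2 - c) * ((1 - s)⁻¹ * (-1) - (1 - (c - s))⁻¹ * (0 - (-1)))) s := by
    intro s hs
    have hcs : (0:ℝ) < c - s := by linarith [hs.2]
    have h1s : (0:ℝ) < 1 - s := by linarith [hs.2]
    have h2s : (0:ℝ) < 1 - (c - s) := by linarith [hs.1]
    have d1 : HasDerivAt (fun s : ℝ => Real.log (c - s)) ((c - s)⁻¹ * (-1)) s :=
      (Real.hasDerivAt_log hcs.ne').comp s ((hasDerivAt_id s).const_sub c)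
    have d2 : HasDerivAt (fun s : ℝ => Real.log s) s⁻¹ s := Real.hasDerivAt_log hs.1.ne'
    have d3 : HasDerivAt (fun s : ℝ => Real.log (1 - s)) ((1 - s)⁻¹ * (-1)) s :=
      (Real.hasDerivAt_log h1s.ne').comp s ((hasDerivAt_id s).const_sub 1)
    have d4 : HasDerivAt (fun s : ℝ => Real.log (1 - (c - s))) ((1 - (c - s))⁻¹ * (0 - (-1))) s :=
      by have := (Real.hasDerivAt_log h2s.ne').comp s
          ((hasDerivAt_const s (1:ℝ)).sub ((hasDerivAt_id s).const_sub c))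
         exact this
    exact ((d1.sub d2).const_mul c).sub ((d3.sub d4).const_mul (2 - c))
  have hderiv_nonpos : ∀ s ∈ Ioo (0:ℝ) c,
      (c * ((c - s)⁻¹ * (-1) - s⁻¹)
        - (2 - c) * ((1 - s)⁻¹ * (-1) - (1 - (c - s))⁻¹ * (0 - (-1)))) ≤ 0 := by
    intro s hs
    have hcs : (0:ℝ) < c - s := by linarith [hs.2]
    have h1s : (0:ℝ) < 1 - s := by linarith [hs.2]
    have h2s : (0:ℝ) < 1 - (c - s) := by linarith [hs.1]
    have hs0 := hs.1
    have hE : (c * ((c - s)⁻¹ * (-1) - s⁻¹)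
        - (2 - c) * ((1 - s)⁻¹ * (-1) - (1 - (c - s))⁻¹ * (0 - (-1))))
        = -((1 - c) * (c - 2*s)^2 / (s * (c - s) * (1 - s) * (1 - (c - s)))) := by
      field_simp
      ring
    rw [hE, neg_nonpos]
    have h1c : (0:ℝ) ≤ 1 - c := by linarith
    positivity
  have hanti : AntitoneOn G (Icc t (c/2)) := by
    have hsub : Icc t (c/2) ⊆ Ioo (0:ℝ) c := fun s hs =>
      ⟨lt_of_lt_of_le ht hs.1, lt_of_le_of_lt hs.2 (by linarith)⟩
    apply antitoneOn_of_deriv_nonpos (convex_Icc _ _)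
    · exact fun s hs => ((hderiv s (hsub hs)).continuousAt).continuousWithinAt
    · intro s hs
      rw [interior_Icc] at hs
      exact ((hderiv s (hsub (Ioo_subset_Icc_self hs))).differentiableAt).differentiableWithinAt
    · intro s hs
      rw [interior_Icc] at hs
      rw [(hderiv s (hsub (Ioo_subset_Icc_self hs))).deriv]
      exact hderiv_nonpos s (hsub (Ioo_subset_Icc_self hs))
  have hmem1 : t ∈ Icc t (c/2) := ⟨le_refl t, ht2⟩
  have hmem2 : c/2 ∈ Icc t (c/2) := ⟨ht2, le_refl _⟩
  have := hanti hmem1 hmem2 ht2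
  have hGhalf : G (c/2) = 0 := by
    have h1 : c - c/2 = c/2 := by ring
    simp only [hGdef, h1]
    ring
  rw [hGhalf] at this
  -- this : 0 ≤ G t
  simp only [hGdef] at this
  linarith

lemma fAux_ge (c β : ℝ) (hc0 : 0 < c) (hc1 : c < 1) (hβ : β = 2 / c - 1)
    {x : ℝ} (hx : x ∈ Icc (0:ℝ) c) : fAux c β 0 ≤ fAux c β x := by
  have hβc : β * c = 2 - c := by
    rw [hβ]; field_simp
  have hc2 : (0:ℝ) < c/2 := by linarith
  -- derivative sign on (0, c/2)
  have hmono : MonotoneOn (fAux c β) (Icc 0 (c/2)) := by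
    apply monotoneOn_of_deriv_nonneg (convex_Icc _ _) ((fAux_continuous c β).continuousOn)
    · intro s hs
      rw [interior_Icc] at hs
      exact ((hasDerivAt_fAux c β hs.1 (by linarith [hs.2]) hc1)).differentiableAt.differentiableWithinAt
    · intro s hs
      rw [interior_Icc] at hs
      rw [(hasDerivAt_fAux c β hs.1 (by linarith [hs.2]) hc1).deriv]
      have hG := G_nonneg c hc0 hc1 hs.1 (le_of_lt hs.2)
      have key : c * (β * (Real.log (1 - (c - s)) - Real.log (1 - s))
          + (Real.log (c - s) - Real.log s))
          = (2 - c) * (Real.log (1 - (c - s)) - Real.log (1 - s))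
            + c * (Real.log (c - s) - Real.log s) := by
        rw [← hβc]; ring
      have hX : 0 ≤ c * (β * (Real.log (1 - (c - s)) - Real.log (1 - s))
          + (Real.log (c - s) - Real.log s)) := by linarith
      nlinarith [hX]
  have hanti : AntitoneOn (fAux c β) (Icc (c/2) c) := by
    apply antitoneOn_of_deriv_nonpos (convex_Icc _ _) ((fAux_continuous c β).continuousOn)
    · intro s hs
      rw [interior_Icc] at hs
      exact ((hasDerivAt_fAux c β (by linarith [hs.1]) hs.2 hc1)).differentiableAt.differentiableWithinAt
    · intro s hs
      rw [interior_Icc] at hs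
      rw [(hasDerivAt_fAux c β (by linarith [hs.1]) hs.2 hc1).deriv]
      have ht : (0:ℝ) < c - s := by linarith [hs.2]
      have ht2 : c - s ≤ c/2 := by linarith [hs.1]
      have hG := G_nonneg c hc0 hc1 ht ht2
      rw [show c - (c - s) = s by ring] at hG
      have key : c * (β * (Real.log (1 - (c - s)) - Real.log (1 - s))
          + (Real.log (c - s) - Real.log s))
          = (2 - c) * (Real.log (1 - (c - s)) - Real.log (1 - s))
            + c * (Real.log (c - s) - Real.log s) := by
        rw [← hβc]; ring
      have hX : c * (β * (Real.log (1 - (c - s)) - Real.log (1 - s))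
          + (Real.log (c - s) - Real.log s)) ≤ 0 := by linarith
      nlinarith [hX]
  have hf0c : fAux c β c = fAux c β 0 := by
    simp only [fAux, sub_self, sub_zero, Real.log_one]
    ring
  rcases le_total x (c/2) with h | h
  · exact hmono ⟨le_refl 0, by linarith⟩ ⟨hx.1, h⟩ hx.1
  · have := hanti ⟨h, hx.2⟩ ⟨by linarith, le_refl c⟩ hx.2
    rw [hf0c] at this
    exact this

lemma psiFn_eq_exp (c β : ℝ) (hc1 : c < 1) {x : ℝ} (hx0 : 0 ≤ x) (hxc : x ≤ c) :
    psiFn c β x = Real.exp (fAux c β x) := by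
  have h1 : (0:ℝ) < 1 - x := by linarith
  have h2 : (0:ℝ) < 1 - (c - x) := by linarith
  have h3 : (0:ℝ) ≤ c - x := by linarith
  rw [psiFn, Real.rpow_def_of_pos h1, Real.rpow_def_of_pos h2, rpow_self_exp hx0,
    rpow_self_exp h3, ← Real.exp_add, ← Real.exp_add, ← Real.exp_sub]
  congr 1
  rw [fAux]
  ring

/-- Calculus lemma, extremal case: for `0 < c < 1` and `β = 2/c - 1`, the
function `ψ` attains its minimum on `[0, c]` at the endpoints:
`ψ(x) ≥ ψ(0) = ψ(c) = (1-c)^(β(1-c)) / c^c` for all `x ∈ [0, c]`. -/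
theorem psi_min_endpoints (c β : ℝ) (hc0 : 0 < c) (hc1 : c < 1)
    (hβ : β = 2 / c - 1) :
    (∀ x ∈ Set.Icc (0 : ℝ) c,
      (1 - c) ^ (β * (1 - c)) / c ^ c ≤ psiFn c β x) ∧
    psiFn c β 0 = (1 - c) ^ (β * (1 - c)) / c ^ c ∧
    psiFn c β c = (1 - c) ^ (β * (1 - c)) / c ^ c := by
  have h1c : (0:ℝ) < 1 - c := by linarith
  have hconst : (1 - c) ^ (β * (1 - c)) / c ^ c = Real.exp (fAux c β 0) := by
    rw [Real.rpow_def_of_pos h1c, rpow_self_exp (le_of_lt hc0), ← Real.exp_sub]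
    congr 1
    simp only [fAux, sub_zero, Real.log_one]
    ring
  refine ⟨?_, ?_, ?_⟩
  · intro x hx
    rw [hconst, psiFn_eq_exp c β hc1 hx.1 hx.2]
    exact Real.exp_le_exp.mpr (fAux_ge c β hc0 hc1 hβ hx)
  · rw [hconst, psiFn_eq_exp c β hc1 (le_refl 0) (le_of_lt hc0)]
  · rw [hconst, psiFn_eq_exp c β hc1 (le_of_lt hc0) (le_refl c)]
    congr 1
    simp only [fAux, sub_self, sub_zero, Real.log_one]
    ring
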